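/- The isomorphism class (in the arrow category) of the restriction Φ_{[1,3]}: I[1,3]^{m} → I[1,3]^{m'} of a morphism Φ between direct sums of interval representations of A_3(bf) is independent of the choice of indecomposable decompositions: if Φ = R Ψ C for isomorphisms R, C, then Φ_{[1,3]} = R_{[1,3]} Ψ_{[1,3]} C_{[1,3]} with R_{[1,3]}, C_{[1,3]} isomorphisms. -/
import Mathlib


/-- The ambient space of the direct sum `⊕_{(a,b)} I[a,b]^{m (a,b)}` of interval
representations: one copy of `K^{m p}` for each pair `p = (a,b)`. -/
abbrev IntSum (K : Type) [Field K] (m : ℕ × ℕ → ℕ) := ∀ p : ℕ × ℕ, Fin (m p) → K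

/-- Projection of the ambient space onto the part supported at vertex `v`: it keeps the
component of `I[a,b]` exactly when `[a,b]` is a valid interval of the `A_n` quiver
(`1 ≤ a ≤ b ≤ n`) containing `v`.  The vertex-`v` space of the direct-sum representation
is the image of `trunc`, and for an arrow between vertices `i` and `i+1` the structure
map of the representation is (the restriction of) `trunc (i+1) ∘ trunc i`, keeping exactly
the intervals containing both endpoints. -/
def trunc (K : Type) [Field K] (n : ℕ) (m : ℕ × ℕ → ℕ) (v : ℕ) :
    IntSum K m →ₗ[K] IntSum K m :=
  LinearMap.pi fun p =>
    if 1 ≤ p.1 ∧ p.1 ≤ v ∧ v ≤ p.2 ∧ p.2 ≤ n then LinearMap.proj p else 0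

/-- A morphism of representations of the `A_n` quiver with orientation `τ`
(`τ i = true` meaning the `i`-th arrow points forward `i → i+1`) between the direct sums
of interval representations with multiplicities `m` and `m'`: a family of linear maps
`θ v` (one for each vertex), supported on the vertex spaces, commuting with the structure
maps of the two representations. -/
structure RepMor (K : Type) [Field K] (n : ℕ) (τ : ℕ → Bool) (m m' : ℕ × ℕ → ℕ) where
  θ : ℕ → IntSum K m →ₗ[K] IntSum K m'
  supp : ∀ v, trunc K n m' v ∘ₗ θ v ∘ₗ trunc K n m v = θ v
  commF : ∀ i, 1 ≤ i → i < n → τ i = true →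
    θ (i + 1) ∘ₗ trunc K n m (i + 1) ∘ₗ trunc K n m i =
      trunc K n m' (i + 1) ∘ₗ θ i ∘ₗ trunc K n m i
  commB : ∀ i, 1 ≤ i → i < n → τ i = false →
    θ i ∘ₗ trunc K n m i ∘ₗ trunc K n m (i + 1) =
      trunc K n m' i ∘ₗ θ (i + 1) ∘ₗ trunc K n m (i + 1)

/-- The diagonal block of a morphism at the interval `I[p.1, p.2]` and vertex `v`:
the composition (projection onto the `I[a,b]`-isotypic summand) ∘ (the morphism) ∘
(inclusion of the `I[a,b]`-isotypic summand). -/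
def blk {K : Type} [Field K] {n : ℕ} {τ : ℕ → Bool} {m m' : ℕ × ℕ → ℕ}
    (Θ : RepMor K n τ m m') (p : ℕ × ℕ) (v : ℕ) :
    (Fin (m p) → K) →ₗ[K] (Fin (m' p) → K) :=
  LinearMap.proj p ∘ₗ Θ.θ v ∘ₗ LinearMap.single K (fun p => Fin (m p) → K) p

/-- The orientation `bf` of the `A₃` quiver: arrow 1 backward (`2 → 1`), arrow 2 forward
(`2 → 3`). -/
def tauBF : ℕ → Bool := fun i => i == 2


section Aux
variable {K : Type} [Field K] {n : ℕ} {m : ℕ × ℕ → ℕ}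

lemma trunc_apply (v : ℕ) (x : IntSum K m) (p : ℕ × ℕ) :
    trunc K n m v x p = if 1 ≤ p.1 ∧ p.1 ≤ v ∧ v ≤ p.2 ∧ p.2 ≤ n then x p else 0 := by
  by_cases h : 1 ≤ p.1 ∧ p.1 ≤ v ∧ v ≤ p.2 ∧ p.2 ≤ n <;> simp [trunc, h]

lemma trunc_idem_apply (v : ℕ) (x : IntSum K m) :
    trunc K n m v (trunc K n m v x) = trunc K n m v x := by
  funext p
  simp only [trunc_apply]
  split <;> rfl

lemma trunc_single_of (v : ℕ) (q : ℕ × ℕ)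
    (h : 1 ≤ q.1 ∧ q.1 ≤ v ∧ v ≤ q.2 ∧ q.2 ≤ n) (x : Fin (m q) → K) :
    trunc K n m v (Pi.single q x) = Pi.single q x := by
  funext p
  rw [trunc_apply]
  by_cases hp : p = q
  · subst hp; rw [if_pos h]
  · rw [Pi.single_eq_of_ne hp]
    split <;> rfl

lemma trunc_single_zero (v : ℕ) (q : ℕ × ℕ)
    (h : ¬(1 ≤ q.1 ∧ q.1 ≤ v ∧ v ≤ q.2 ∧ q.2 ≤ n)) (x : Fin (m q) → K) :
    trunc K n m v (Pi.single q x) = 0 := by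
  funext p
  rw [trunc_apply]
  by_cases hp : p = q
  · subst hp; rw [if_neg h]; rfl
  · rw [Pi.single_eq_of_ne hp]
    split <;> rfl

lemma dec1 (y : IntSum K m) :
    trunc K 3 m 1 y = Pi.single ((1,1) : ℕ × ℕ) (y (1,1)) + Pi.single ((1,2) : ℕ × ℕ) (y (1,2))
      + Pi.single ((1,3) : ℕ × ℕ) (y (1,3)) := by
  funext p
  by_cases h1 : p = ((1,1) : ℕ × ℕ)
  · subst h1; norm_num [trunc_apply, Pi.single_apply]
  by_cases h2 : p = ((1,2) : ℕ × ℕ)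
  · subst h2; norm_num [trunc_apply, Pi.single_apply]
  by_cases h3 : p = ((1,3) : ℕ × ℕ)
  · subst h3; norm_num [trunc_apply, Pi.single_apply]
  · have hc : ¬(1 ≤ p.1 ∧ p.1 ≤ 1 ∧ 1 ≤ p.2 ∧ p.2 ≤ 3) := by
      rcases p with ⟨a, b⟩
      simp only [Prod.mk.injEq, not_and] at h1 h2 h3 ⊢
      omega
    rw [trunc_apply, if_neg hc]
    simp only [Pi.add_apply]
    rw [Pi.single_eq_of_ne h1, Pi.single_eq_of_ne h2, Pi.single_eq_of_ne h3]; simp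

lemma dec2 (y : IntSum K m) :
    trunc K 3 m 2 y = Pi.single ((1,2) : ℕ × ℕ) (y (1,2)) + Pi.single ((1,3) : ℕ × ℕ) (y (1,3))
      + Pi.single ((2,2) : ℕ × ℕ) (y (2,2)) + Pi.single ((2,3) : ℕ × ℕ) (y (2,3)) := by
  funext p
  by_cases h1 : p = ((1,2) : ℕ × ℕ)
  · subst h1; norm_num [trunc_apply, Pi.single_apply]
  by_cases h2 : p = ((1,3) : ℕ × ℕ)
  · subst h2; norm_num [trunc_apply, Pi.single_apply]
  by_cases h3 : p = ((2,2) : ℕ × ℕ)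
  · subst h3; norm_num [trunc_apply, Pi.single_apply]
  by_cases h4 : p = ((2,3) : ℕ × ℕ)
  · subst h4; norm_num [trunc_apply, Pi.single_apply]
  · have hc : ¬(1 ≤ p.1 ∧ p.1 ≤ 2 ∧ 2 ≤ p.2 ∧ p.2 ≤ 3) := by
      rcases p with ⟨a, b⟩
      simp only [Prod.mk.injEq, not_and] at h1 h2 h3 h4 ⊢
      omega
    rw [trunc_apply, if_neg hc]
    simp only [Pi.add_apply]
    rw [Pi.single_eq_of_ne h1, Pi.single_eq_of_ne h2, Pi.single_eq_of_ne h3, Pi.single_eq_of_ne h4]; simp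

lemma dec3 (y : IntSum K m) :
    trunc K 3 m 3 y = Pi.single ((1,3) : ℕ × ℕ) (y (1,3)) + Pi.single ((2,3) : ℕ × ℕ) (y (2,3))
      + Pi.single ((3,3) : ℕ × ℕ) (y (3,3)) := by
  funext p
  by_cases h1 : p = ((1,3) : ℕ × ℕ)
  · subst h1; norm_num [trunc_apply, Pi.single_apply]
  by_cases h2 : p = ((2,3) : ℕ × ℕ)
  · subst h2; norm_num [trunc_apply, Pi.single_apply]
  by_cases h3 : p = ((3,3) : ℕ × ℕ)
  · subst h3; norm_num [trunc_apply, Pi.single_apply]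
  · have hc : ¬(1 ≤ p.1 ∧ p.1 ≤ 3 ∧ 3 ≤ p.2 ∧ p.2 ≤ 3) := by
      rcases p with ⟨a, b⟩
      simp only [Prod.mk.injEq, not_and] at h1 h2 h3 ⊢
      omega
    rw [trunc_apply, if_neg hc]
    simp only [Pi.add_apply]
    rw [Pi.single_eq_of_ne h1, Pi.single_eq_of_ne h2, Pi.single_eq_of_ne h3]; simp

end Aux

section RepAux
variable {K : Type} [Field K] {n : ℕ} {τ : ℕ → Bool} {ma mb mc : ℕ × ℕ → ℕ}

lemma supp_apply (Θ : RepMor K n τ ma mb) (v : ℕ) (x : IntSum K ma) :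
    trunc K n mb v (Θ.θ v (trunc K n ma v x)) = Θ.θ v x :=
  DFunLike.congr_fun (Θ.supp v) x

lemma theta_trunc_apply (Θ : RepMor K n τ ma mb) (v : ℕ) (x : IntSum K ma) :
    Θ.θ v (trunc K n ma v x) = Θ.θ v x := by
  have h1 := supp_apply Θ v (trunc K n ma v x)
  rw [trunc_idem_apply] at h1
  rw [← h1, supp_apply]

lemma trunc_theta_apply (Θ : RepMor K n τ ma mb) (v : ℕ) (x : IntSum K ma) :
    trunc K n mb v (Θ.θ v x) = Θ.θ v x := by
  conv_lhs => rw [← supp_apply Θ v x]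
  rw [trunc_idem_apply]
  exact supp_apply Θ v x

lemma theta_apply_eq_zero (Θ : RepMor K n τ ma mb) (v : ℕ) (x : IntSum K ma) (q : ℕ × ℕ)
    (h : ¬(1 ≤ q.1 ∧ q.1 ≤ v ∧ v ≤ q.2 ∧ q.2 ≤ n)) : Θ.θ v x q = 0 := by
  rw [← trunc_theta_apply, trunc_apply, if_neg h]

/-- Composition of morphisms of representations. -/
def RepMor.comp (A : RepMor K n τ mb mc) (B : RepMor K n τ ma mb) : RepMor K n τ ma mc where
  θ v := A.θ v ∘ₗ B.θ v
  supp v := by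
    refine LinearMap.ext fun x => ?_
    simp only [LinearMap.comp_apply]
    rw [trunc_theta_apply A, theta_trunc_apply B]
  commF i h1 h2 ht := by
    refine LinearMap.ext fun x => ?_
    have hB := DFunLike.congr_fun (B.commF i h1 h2 ht) x
    have hA := DFunLike.congr_fun (A.commF i h1 h2 ht) (B.θ i (trunc K n ma i x))
    simp only [LinearMap.comp_apply] at hB hA ⊢
    rw [hB, ← trunc_theta_apply B i (trunc K n ma i x), hA,
      trunc_theta_apply B i (trunc K n ma i x)]
  commB i h1 h2 ht := by
    refine LinearMap.ext fun x => ?_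
    have hB := DFunLike.congr_fun (B.commB i h1 h2 ht) x
    have hA := DFunLike.congr_fun (A.commB i h1 h2 ht) (B.θ (i + 1) (trunc K n ma (i + 1) x))
    simp only [LinearMap.comp_apply] at hB hA ⊢
    rw [hB, ← trunc_theta_apply B (i + 1) (trunc K n ma (i + 1) x), hA,
      trunc_theta_apply B (i + 1) (trunc K n ma (i + 1) x)]

@[simp] lemma RepMor.comp_theta (A : RepMor K n τ mb mc) (B : RepMor K n τ ma mb) (v : ℕ) :
    (A.comp B).θ v = A.θ v ∘ₗ B.θ v := rfl

lemma blk_apply (Θ : RepMor K n τ ma mb) (p : ℕ × ℕ) (v : ℕ) (x : Fin (ma p) → K) :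
    blk Θ p v x = Θ.θ v (Pi.single p x) p := by
  simp [blk, LinearMap.coe_single]

end RepAux

section ZLemmas
variable {K : Type} [Field K] {ma mb mc : ℕ × ℕ → ℕ} (Θ : RepMor K 3 tauBF ma mb)

lemma z2F (q : ℕ × ℕ) (h2 : 1 ≤ q.1 ∧ q.1 ≤ 2 ∧ 2 ≤ q.2 ∧ q.2 ≤ 3)
    (h3 : ¬(1 ≤ q.1 ∧ q.1 ≤ 3 ∧ 3 ≤ q.2 ∧ q.2 ≤ 3)) (x : Fin (ma q) → K) :
    Θ.θ 2 (Pi.single q x) (1,3) = 0 := by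
  have hF := DFunLike.congr_fun (Θ.commF 2 (by norm_num) (by norm_num) (by decide))
    (Pi.single q x)
  simp only [LinearMap.comp_apply, Nat.reduceAdd] at hF
  rw [trunc_single_of 2 q h2 x, trunc_single_zero 3 q h3 x, map_zero] at hF
  have h := congrFun hF.symm ((1,3) : ℕ × ℕ)
  rw [trunc_apply, if_pos (by norm_num)] at h
  simpa using h

lemma z2B (q : ℕ × ℕ) (h2 : 1 ≤ q.1 ∧ q.1 ≤ 2 ∧ 2 ≤ q.2 ∧ q.2 ≤ 3)
    (h1 : ¬(1 ≤ q.1 ∧ q.1 ≤ 1 ∧ 1 ≤ q.2 ∧ q.2 ≤ 3)) (x : Fin (ma q) → K) :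
    Θ.θ 2 (Pi.single q x) (1,3) = 0 := by
  have hB := DFunLike.congr_fun (Θ.commB 1 le_rfl (by norm_num) (by decide))
    (Pi.single q x)
  simp only [LinearMap.comp_apply, Nat.reduceAdd] at hB
  rw [trunc_single_of 2 q h2 x, trunc_single_zero 1 q h1 x, map_zero] at hB
  have h := congrFun hB.symm ((1,3) : ℕ × ℕ)
  rw [trunc_apply, if_pos (by norm_num)] at h
  simpa using h

lemma theta1_single (q : ℕ × ℕ) (h1 : 1 ≤ q.1 ∧ q.1 ≤ 1 ∧ 1 ≤ q.2 ∧ q.2 ≤ 3)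
    (h2 : 1 ≤ q.1 ∧ q.1 ≤ 2 ∧ 2 ≤ q.2 ∧ q.2 ≤ 3) (x : Fin (ma q) → K) :
    Θ.θ 1 (Pi.single q x) = trunc K 3 mb 1 (Θ.θ 2 (Pi.single q x)) := by
  have hB := DFunLike.congr_fun (Θ.commB 1 le_rfl (by norm_num) (by decide))
    (Pi.single q x)
  simp only [LinearMap.comp_apply, Nat.reduceAdd] at hB
  rwa [trunc_single_of 2 q h2 x, trunc_single_of 1 q h1 x] at hB

lemma theta3_single (q : ℕ × ℕ) (h3 : 1 ≤ q.1 ∧ q.1 ≤ 3 ∧ 3 ≤ q.2 ∧ q.2 ≤ 3)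
    (h2 : 1 ≤ q.1 ∧ q.1 ≤ 2 ∧ 2 ≤ q.2 ∧ q.2 ≤ 3) (x : Fin (ma q) → K) :
    Θ.θ 3 (Pi.single q x) = trunc K 3 mb 3 (Θ.θ 2 (Pi.single q x)) := by
  have hF := DFunLike.congr_fun (Θ.commF 2 (by norm_num) (by norm_num) (by decide))
    (Pi.single q x)
  simp only [LinearMap.comp_apply, Nat.reduceAdd] at hF
  rwa [trunc_single_of 2 q h2 x, trunc_single_of 3 q h3 x] at hF

lemma z1_12 (x : Fin (ma (1,2)) → K) : Θ.θ 1 (Pi.single ((1,2) : ℕ × ℕ) x) (1,3) = 0 := by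
  rw [theta1_single Θ (1,2) (by norm_num) (by norm_num) x, trunc_apply, if_pos (by norm_num)]
  exact z2F Θ (1,2) (by norm_num) (by norm_num) x

lemma z1_11 (x : Fin (ma (1,3)) → K) : Θ.θ 1 (Pi.single ((1,3) : ℕ × ℕ) x) (1,1) = 0 := by
  rw [theta1_single Θ (1,3) (by norm_num) (by norm_num) x, trunc_apply, if_pos (by norm_num)]
  exact theta_apply_eq_zero Θ 2 _ (1,1) (by norm_num)

lemma z3_23 (x : Fin (ma (2,3)) → K) : Θ.θ 3 (Pi.single ((2,3) : ℕ × ℕ) x) (1,3) = 0 := by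
  rw [theta3_single Θ (2,3) (by norm_num) (by norm_num) x, trunc_apply, if_pos (by norm_num)]
  exact z2B Θ (2,3) (by norm_num) (by norm_num) x

lemma z3_33 (x : Fin (ma (1,3)) → K) : Θ.θ 3 (Pi.single ((1,3) : ℕ × ℕ) x) (3,3) = 0 := by
  rw [theta3_single Θ (1,3) (by norm_num) (by norm_num) x, trunc_apply, if_pos (by norm_num)]
  exact theta_apply_eq_zero Θ 2 _ (3,3) (by norm_num)

lemma key (A : RepMor K 3 tauBF mb mc) (B : RepMor K 3 tauBF ma mb) (v : ℕ)
    (hv : v = 1 ∨ v = 2 ∨ v = 3) (x : Fin (ma (1,3)) → K) :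
    A.θ v (B.θ v (Pi.single ((1,3) : ℕ × ℕ) x)) (1,3)
      = A.θ v (Pi.single ((1,3) : ℕ × ℕ) (B.θ v (Pi.single ((1,3) : ℕ × ℕ) x) (1,3))) (1,3) := by
  set y := B.θ v (Pi.single ((1,3) : ℕ × ℕ) x) with hy
  rcases hv with rfl | rfl | rfl
  · rw [← theta_trunc_apply A 1 y, dec1]
    have e1 : y (1,1) = 0 := z1_11 B x
    rw [e1]
    simp [z1_12 A]
  · rw [← theta_trunc_apply A 2 y, dec2]
    simp [z2F A (1,2) (by norm_num) (by norm_num), z2F A (2,2) (by norm_num) (by norm_num),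
      z2B A (2,3) (by norm_num) (by norm_num)]
  · rw [← theta_trunc_apply A 3 y, dec3]
    have e3 : y (3,3) = 0 := z3_33 B x
    rw [e3]
    simp [z3_23 A]

end ZLemmas

/-- The isomorphism class (in the arrow category) of the `I[1,3]`-diagonal
block of a morphism `Φ` between direct sums of interval representations of `A₃(bf)` is
independent of the choice of indecomposable decompositions: if `Φ = R ∘ Ψ ∘ C` with `R`, `C`
isomorphisms (having two-sided inverses `Rinv`, `Cinv`), then
`Φ_{[1,3]} = R_{[1,3]} ∘ Ψ_{[1,3]} ∘ C_{[1,3]}` where `R_{[1,3]}` and `C_{[1,3]}` are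
isomorphisms. -/
theorem blk13_independent_of_decomposition (K : Type) [Field K]
    (m m' m₂ m₂' : ℕ × ℕ → ℕ)
    (Φ : RepMor K 3 tauBF m m') (Ψ : RepMor K 3 tauBF m₂ m₂')
    (C : RepMor K 3 tauBF m m₂) (Cinv : RepMor K 3 tauBF m₂ m)
    (R : RepMor K 3 tauBF m₂' m') (Rinv : RepMor K 3 tauBF m' m₂')
    (hC₁ : ∀ v, Cinv.θ v ∘ₗ C.θ v = trunc K 3 m v)
    (hC₂ : ∀ v, C.θ v ∘ₗ Cinv.θ v = trunc K 3 m₂ v)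
    (hR₁ : ∀ v, Rinv.θ v ∘ₗ R.θ v = trunc K 3 m₂' v)
    (hR₂ : ∀ v, R.θ v ∘ₗ Rinv.θ v = trunc K 3 m' v)
    (hΦ : ∀ v, Φ.θ v = R.θ v ∘ₗ Ψ.θ v ∘ₗ C.θ v) :
    ∀ v, 1 ≤ v → v ≤ 3 →
      blk Φ (1, 3) v = blk R (1, 3) v ∘ₗ blk Ψ (1, 3) v ∘ₗ blk C (1, 3) v ∧
      Function.Bijective (blk R (1, 3) v) ∧ Function.Bijective (blk C (1, 3) v) := by
  intro v hv1 hv3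
  have hv : v = 1 ∨ v = 2 ∨ v = 3 := by omega
  have hcond : 1 ≤ (1:ℕ) ∧ 1 ≤ v ∧ v ≤ 3 ∧ 3 ≤ 3 := ⟨le_rfl, hv1, hv3, le_rfl⟩
  refine ⟨?_, ?_, ?_⟩
  · refine LinearMap.ext fun x => ?_
    simp only [LinearMap.comp_apply, blk_apply]
    rw [hΦ v]
    simp only [LinearMap.comp_apply]
    have k1 := key Ψ C v hv x
    rw [← k1]
    have k2 := key R (Ψ.comp C) v hv x
    simp only [RepMor.comp_theta, LinearMap.comp_apply] at k2
    exact k2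
  · refine Function.bijective_iff_has_inverse.mpr ⟨blk Rinv (1,3) v, fun x => ?_, fun x => ?_⟩
    · rw [blk_apply, blk_apply, ← key Rinv R v hv x]
      have h := DFunLike.congr_fun (hR₁ v) (Pi.single ((1,3) : ℕ × ℕ) x)
      simp only [LinearMap.comp_apply] at h
      rw [h, trunc_apply, if_pos hcond, Pi.single_eq_same]
    · rw [blk_apply, blk_apply, ← key R Rinv v hv x]
      have h := DFunLike.congr_fun (hR₂ v) (Pi.single ((1,3) : ℕ × ℕ) x)
      simp only [LinearMap.comp_apply] at h
      rw [h, trunc_apply, if_pos hcond, Pi.single_eq_same]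
  · refine Function.bijective_iff_has_inverse.mpr ⟨blk Cinv (1,3) v, fun x => ?_, fun x => ?_⟩
    · rw [blk_apply, blk_apply, ← key Cinv C v hv x]
      have h := DFunLike.congr_fun (hC₁ v) (Pi.single ((1,3) : ℕ × ℕ) x)
      simp only [LinearMap.comp_apply] at h
      rw [h, trunc_apply, if_pos hcond, Pi.single_eq_same]
    · rw [blk_apply, blk_apply, ← key C Cinv v hv x]
      have h := DFunLike.congr_fun (hC₂ v) (Pi.single ((1,3) : ℕ × ℕ) x)
      simp only [LinearMap.comp_apply] at h
      rw [h, trunc_apply, if_pos hcond, Pi.single_eq_same]
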